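/- A complete lattice satisfies the infinite distributive identity ⋀_{j} ⋁_{i∈I_j} x_j^i = ⋁_{f} ⋀_j x_j^{f(j)} (over all families and choice functions f) if and only if it satisfies the dual identity ⋁_{j} ⋀_{i∈I_j} x_j^i = ⋀_{f} ⋁_j x_j^{f(j)}. -/

import Mathlib

lemma raney_aux {L : Type} [CompleteLattice L]
    (h : ∀ (J : Type) (I : J → Type) (x : ∀ j, I j → L),
        ⨅ j, ⨆ i, x j i = ⨆ f : ∀ j, I j, ⨅ j, x j (f j)) :
    ∀ (J : Type) (I : J → Type) (x : ∀ j, I j → L),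
        ⨆ j, ⨅ i, x j i = ⨅ f : ∀ j, I j, ⨆ j, x j (f j) := by
  intro J I x
  letI : CompletelyDistribLattice L :=
    CompletelyDistribLattice.ofMinimalAxioms ⟨fun {ι κ} f => h ι κ f⟩
  exact iSup_iInf_eq

/-- Raney's theorem: a complete lattice satisfies the infinite distributive
identity `⋀_j ⋁_{i∈I_j} x_j^i = ⋁_f ⋀_j x_j^{f(j)}` (over all families and
choice functions) iff it satisfies the dual identity. -/
theorem complete_distributivity_self_dual {L : Type} [CompleteLattice L] :
    (∀ (J : Type) (I : J → Type) (x : ∀ j, I j → L),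
        ⨅ j, ⨆ i, x j i = ⨆ f : ∀ j, I j, ⨅ j, x j (f j)) ↔
    (∀ (J : Type) (I : J → Type) (x : ∀ j, I j → L),
        ⨆ j, ⨅ i, x j i = ⨅ f : ∀ j, I j, ⨆ j, x j (f j)) := by
  constructor
  · exact raney_aux
  · intro h
    exact raney_aux (L := Lᵒᵈ) h
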